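/- Let λ and μ be partitions of n, and let N_λ, N_μ be nilpotent n×n complex matrices of Jordan types λ and μ respectively. Then rank(N_μ^i) ≤ rank(N_λ^i) for all i ≥ 1 if and only if μ is dominated by λ in the dominance order. -/

import Mathlib

/-- The canonical nilpotent `n × n` matrix of Jordan type `f` (a direct sum of
Jordan blocks whose sizes are the parts of `f`, laid out consecutively). -/
noncomputable def jordanOfType (F : Type) [Field F] (n : ℕ) (f : ℕ → ℕ) :
    Matrix (Fin n) (Fin n) F :=
  Matrix.of fun a b => open scoped Classical in
    if (b : ℕ) = (a : ℕ) + 1 ∧ ∀ k : ℕ, (b : ℕ) ≠ ∑ i ∈ Finset.range k, f i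
    then 1 else 0

/-- Dominance order on partitions: `f` dominates `g` iff every partial sum of
`g` is at most the corresponding partial sum of `f`. -/
def Dominates (f g : ℕ → ℕ) : Prop :=
  ∀ m : ℕ, ∑ i ∈ Finset.range m, g i ≤ ∑ i ∈ Finset.range m, f i

open Finset



lemma downclosed_eq_range (s : Finset ℕ) (h : ∀ i j, i ≤ j → j ∈ s → i ∈ s) :
    s = Finset.range s.card := by
  have key : ∀ x, x ∈ s ↔ x < s.card := by
    intro x
    constructor
    · intro hx
      have hsub : Finset.range (x + 1) ⊆ s := fun i hi =>
        h i x (Nat.lt_succ_iff.mp (mem_range.mp hi)) hx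
      have := Finset.card_le_card hsub
      simpa using this
    · intro hx
      by_contra hxs
      have hsub : s ⊆ Finset.range x := by
        intro y hy
        rw [mem_range]
        by_contra hyx
        exact hxs (h x y (le_of_not_gt hyx) hy)
      have := Finset.card_le_card hsub
      simp only [card_range] at this
      omega
  ext x; simp [key]

lemma sum_tsub_le (a b : ℕ → ℕ) (ha : Antitone a)
    (hd : ∀ m, ∑ i ∈ range m, a i ≤ ∑ i ∈ range m, b i) (c K : ℕ) :
    ∑ i ∈ range K, (a i - c) ≤ ∑ i ∈ range K, (b i - c) := by
  classical
  set s : Finset ℕ := (range K).filter (fun i => c < a i) with hs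
  have hdc : ∀ i j, i ≤ j → j ∈ s → i ∈ s := by
    intro i j hij hj
    simp only [hs, mem_filter, mem_range] at hj ⊢
    exact ⟨lt_of_le_of_lt hij hj.1, lt_of_lt_of_le hj.2 (ha hij)⟩
  have hrange : s = range s.card := downclosed_eq_range s hdc
  set t := s.card with ht
  have htK : t ≤ K := by
    have := Finset.card_le_card (Finset.filter_subset (fun i => c < a i) (range K))
    simpa [← hs] using this
  have hmem : ∀ i < t, c ≤ a i := by
    intro i hi
    have : i ∈ s := by rw [hrange]; exact mem_range.mpr hi
    simp only [hs, mem_filter] at this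
    omega
  have h1 : ∑ i ∈ range K, (a i - c) = ∑ i ∈ range t, (a i - c) := by
    rw [← Finset.sum_filter_of_ne (p := fun i => c < a i), ← hs, hrange]
    intro i _ hne
    omega
  have h2 : ∑ i ∈ range t, (a i - c) + t * c = ∑ i ∈ range t, a i := by
    have e : ∑ i ∈ range t, (a i - c) + ∑ _i ∈ range t, c = ∑ i ∈ range t, (a i - c + c) :=
      Finset.sum_add_distrib.symm
    rw [Finset.sum_const, card_range, smul_eq_mul] at e
    rw [e]
    exact Finset.sum_congr rfl fun i hi => Nat.sub_add_cancel (hmem i (mem_range.mp hi))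
  have h3 : ∑ i ∈ range t, a i ≤ ∑ i ∈ range t, (b i - c) + t * c := by
    calc ∑ i ∈ range t, a i ≤ ∑ i ∈ range t, b i := hd t
    _ ≤ ∑ i ∈ range t, (b i - c + c) := Finset.sum_le_sum fun i _ => by omega
    _ = ∑ i ∈ range t, (b i - c) + t * c := by
        rw [Finset.sum_add_distrib, Finset.sum_const, card_range, smul_eq_mul]
  have h4 : ∑ i ∈ range t, (b i - c) ≤ ∑ i ∈ range K, (b i - c) :=
    Finset.sum_le_sum_of_subset (Finset.range_subset_range.mpr htK)
  omega


noncomputable def conjP (f : ℕ → ℕ) (K : ℕ) (c : ℕ) : ℕ :=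
  ((range K).filter (fun k => c < f k)).card

lemma conjP_antitone (f : ℕ → ℕ) (K : ℕ) : Antitone (conjP f K) := by
  intro c c' h
  classical
  apply Finset.card_le_card
  intro k hk
  simp only [mem_filter] at hk ⊢
  exact ⟨hk.1, lt_of_le_of_lt h hk.2⟩

lemma lt_conjP_iff (f : ℕ → ℕ) (K : ℕ) (hf : Antitone f) (hfK : ∀ j, K ≤ j → f j = 0)
    (c x : ℕ) : x < conjP f K c ↔ c < f x := by
  classical
  have hdc : ∀ i j, i ≤ j → j ∈ (range K).filter (fun k => c < f k) →
      i ∈ (range K).filter (fun k => c < f k) := by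
    intro i j hij hj
    simp only [mem_filter, mem_range] at hj ⊢
    exact ⟨lt_of_le_of_lt hij hj.1, lt_of_lt_of_le hj.2 (hf hij)⟩
  have hr := downclosed_eq_range _ hdc
  constructor
  · intro hx
    have : x ∈ (range K).filter (fun k => c < f k) := by
      rw [hr]; exact mem_range.mpr hx
    exact (mem_filter.mp this).2
  · intro hx
    have hxK : x < K := by
      by_contra h
      rw [hfK x (le_of_not_gt h)] at hx; omega
    have : x ∈ (range K).filter (fun k => c < f k) := mem_filter.mpr ⟨mem_range.mpr hxK, hx⟩
    rw [hr] at this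
    exact mem_range.mp this

lemma filter_lt_range (m x : ℕ) : (range m).filter (fun c => c < x) = range (min x m) := by
  ext c; simp only [mem_filter, mem_range, lt_min_iff]; tauto

lemma card_filter_lt (f : ℕ → ℕ) (K : ℕ) (hf : Antitone f) (hfK : ∀ j, K ≤ j → f j = 0)
    (c m : ℕ) : ((range m).filter (fun k => c < f k)).card = min (conjP f K c) m := by
  classical
  have : (range m).filter (fun k => c < f k) = range (min (conjP f K c) m) := by
    ext x
    simp only [mem_filter, mem_range, lt_min_iff, lt_conjP_iff f K hf hfK c x]
    tauto
  rw [this, card_range]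

lemma doublecount (f : ℕ → ℕ) (C m : ℕ) :
    ∑ c ∈ range C, ((range m).filter (fun k => c < f k)).card
      = ∑ k ∈ range m, min (f k) C := by
  classical
  have h1 : ∀ c, ((range m).filter (fun k => c < f k)).card
      = ∑ k ∈ range m, if c < f k then 1 else 0 := fun c => Finset.card_filter _ _
  simp_rw [h1]
  rw [Finset.sum_comm]
  refine Finset.sum_congr rfl fun k _ => ?_
  have : ∑ c ∈ range C, (if c < f k then 1 else 0) = ((range C).filter (fun c => c < f k)).card :=
    (Finset.card_filter _ _).symm
  rw [this, filter_lt_range, card_range]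

lemma sum_min_tsub (h : ℕ → ℕ) (s : Finset ℕ) (i : ℕ) :
    ∑ k ∈ s, min (h k) i + ∑ k ∈ s, (h k - i) = ∑ k ∈ s, h k := by
  rw [← Finset.sum_add_distrib]
  exact Finset.sum_congr rfl fun k _ => by omega

lemma key_iff (n : ℕ) (f g : ℕ → ℕ) (Kf Kg : ℕ)
    (hf : Antitone f) (hg : Antitone g)
    (hfK : ∀ j, Kf ≤ j → f j = 0) (hgK : ∀ j, Kg ≤ j → g j = 0)
    (hfsum : ∑ j ∈ range Kf, f j = n) (hgsum : ∑ j ∈ range Kg, g j = n) :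
    (∀ i : ℕ, 1 ≤ i → ∑ k ∈ range Kg, (g k - i) ≤ ∑ k ∈ range Kf, (f k - i)) ↔
      (∀ m : ℕ, ∑ j ∈ range m, g j ≤ ∑ j ∈ range m, f j) := by
  classical
  constructor
  · intro H m
    -- partial sums of conjugates are dominated the other way
    have hconjf : ∀ i, ∑ c ∈ range i, conjP f Kf c = ∑ k ∈ range Kf, min (f k) i := by
      intro i
      simpa [conjP] using doublecount f i Kf
    have hconjg : ∀ i, ∑ c ∈ range i, conjP g Kg c = ∑ k ∈ range Kg, min (g k) i := by
      intro i
      simpa [conjP] using doublecount g i Kg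
    have hdom' : ∀ i, ∑ c ∈ range i, conjP f Kf c ≤ ∑ c ∈ range i, conjP g Kg c := by
      intro i
      rcases Nat.eq_zero_or_pos i with hi | hi
      · simp [hi]
      · have h1 := sum_min_tsub f (range Kf) i
        have h2 := sum_min_tsub g (range Kg) i
        have h3 := H i hi
        rw [hconjf, hconjg]
        omega
    set C := f 0 + g 0 + 1 with hC
    have hsub := sum_tsub_le (conjP f Kf) (conjP g Kg) (conjP_antitone f Kf) hdom' m C
    have htotf : ∑ c ∈ range C, conjP f Kf c = n := by
      rw [hconjf, ← hfsum]
      exact Finset.sum_congr rfl fun k _ => by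
        have := hf (Nat.zero_le k); omega
    have htotg : ∑ c ∈ range C, conjP g Kg c = n := by
      rw [hconjg, ← hgsum]
      exact Finset.sum_congr rfl fun k _ => by
        have := hg (Nat.zero_le k); omega
    have hminf : ∑ c ∈ range C, min (conjP f Kf c) m = ∑ j ∈ range m, f j := by
      have e1 : ∀ c, min (conjP f Kf c) m = ((range m).filter (fun k => c < f k)).card :=
        fun c => (card_filter_lt f Kf hf hfK c m).symm
      simp_rw [e1]
      rw [doublecount f C m]
      exact Finset.sum_congr rfl fun j _ => by
        have := hf (Nat.zero_le j); omega
    have hming : ∑ c ∈ range C, min (conjP g Kg c) m = ∑ j ∈ range m, g j := by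
      have e1 : ∀ c, min (conjP g Kg c) m = ((range m).filter (fun k => c < g k)).card :=
        fun c => (card_filter_lt g Kg hg hgK c m).symm
      simp_rw [e1]
      rw [doublecount g C m]
      exact Finset.sum_congr rfl fun j _ => by
        have := hg (Nat.zero_le j); omega
    have m1 := sum_min_tsub (conjP f Kf) (range C) m
    have m2 := sum_min_tsub (conjP g Kg) (range C) m
    simp only [conjP] at *
    omega
  · intro h i _
    set K := max Kf Kg with hK
    have h1 : ∑ k ∈ range Kg, (g k - i) = ∑ k ∈ range K, (g k - i) := by
      apply Finset.sum_subset (Finset.range_subset_range.mpr (le_max_right _ _))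
      intro x _ hx
      rw [hgK x (by simp only [mem_range, not_lt] at hx; omega)]; omega
    have h2 : ∑ k ∈ range Kf, (f k - i) = ∑ k ∈ range K, (f k - i) := by
      apply Finset.sum_subset (Finset.range_subset_range.mpr (le_max_left _ _))
      intro x _ hx
      rw [hfK x (by simp only [mem_range, not_lt] at hx; omega)]; omega
    rw [h1, h2]
    exact sum_tsub_le g f hg h i K

open scoped Classical in
lemma jordan_pow_apply (n : ℕ) (f : ℕ → ℕ) (i : ℕ) (a b : Fin n) :
    ((jordanOfType ℂ n f) ^ i) a b =
      if ((b : ℕ) = (a : ℕ) + i ∧ ∀ c : ℕ, (a : ℕ) < c → c ≤ (a : ℕ) + i →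
          ∀ k : ℕ, c ≠ ∑ j ∈ Finset.range k, f j) then (1 : ℂ) else 0 := by
  classical
  induction i generalizing b with
  | zero =>
    simp only [pow_zero, Matrix.one_apply, Nat.add_zero]
    by_cases h : a = b
    · subst h
      rw [if_pos rfl, if_pos ⟨rfl, fun c hc hc' => by omega⟩]
    · rw [if_neg h, if_neg]
      rintro ⟨h1, -⟩
      exact h (Fin.ext h1).symm
  | succ i IH =>
    rw [pow_succ, Matrix.mul_apply]
    set P : Prop := (∀ c : ℕ, (a : ℕ) < c → c ≤ (a : ℕ) + i →
        ∀ k : ℕ, c ≠ ∑ j ∈ Finset.range k, f j) with hP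
    set Q : Prop := (∀ k : ℕ, (b : ℕ) ≠ ∑ j ∈ Finset.range k, f j) with hQ
    by_cases hb : (b : ℕ) = (a : ℕ) + i + 1
    · have hain : (a : ℕ) + i < n := by have := b.isLt; omega
      set c0 : Fin n := ⟨(a : ℕ) + i, hain⟩ with hc0
      have hmain : ∑ c : Fin n, ((jordanOfType ℂ n f) ^ i) a c * jordanOfType ℂ n f c b
          = ((jordanOfType ℂ n f) ^ i) a c0 * jordanOfType ℂ n f c0 b := by
        apply Finset.sum_eq_single c0
        · intro c _ hc
          rw [IH c, if_neg, zero_mul]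
          rintro ⟨h1, -⟩
          exact hc (Fin.ext (by simp [hc0, h1]))
        · intro h; exact absurd (Finset.mem_univ c0) h
      rw [hmain, IH c0]
      have e1 : (((c0 : ℕ) = (a : ℕ) + i ∧ P)) ↔ P := and_iff_right rfl
      have e2 : (((b : ℕ) = (c0 : ℕ) + 1 ∧ Q)) ↔ Q := and_iff_right (by simp [hc0]; omega)
      have hsplit : ((b : ℕ) = (a : ℕ) + (i + 1) ∧ (∀ c : ℕ, (a : ℕ) < c → c ≤ (a : ℕ) + (i + 1) →
          ∀ k : ℕ, c ≠ ∑ j ∈ Finset.range k, f j)) ↔ (P ∧ Q) := by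
        constructor
        · rintro ⟨-, h2⟩
          exact ⟨fun c hc hc' => h2 c hc (by omega), fun k => by
            have := h2 (b : ℕ) (by omega) (by omega) k; exact this⟩
        · rintro ⟨h1, h2⟩
          refine ⟨by omega, fun c hc hc' k => ?_⟩
          rcases Nat.lt_or_ge c ((a : ℕ) + i + 1) with hlt | hge
          · exact h1 c hc (by omega) k
          · have : c = (b : ℕ) := by omega
            rw [this]; exact h2 k
      rw [if_congr hsplit rfl rfl]
      simp only [jordanOfType, Matrix.of_apply]
      have hQ' : (∀ k : ℕ, ¬ ((a : ℕ) + i + 1 = ∑ j ∈ Finset.range k, f j)) ↔ Q := by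
        rw [hQ]
        constructor
        · intro h k; rw [hb]; exact h k
        · intro h k; rw [← hb]; exact h k
      by_cases h1 : P <;> by_cases h2 : Q <;>
        simp [h1, h2, hb, hQ'] <;> split_ifs <;> tauto
    · rw [if_neg (by rintro ⟨h1, -⟩; omega)]
      apply Finset.sum_eq_zero
      intro c _
      rw [IH c]
      simp only [jordanOfType, Matrix.of_apply]
      by_cases h1 : (c : ℕ) = (a : ℕ) + i
      · rw [mul_ite, mul_one, mul_zero]
        rw [if_neg]
        rintro ⟨hb1, -⟩
        omega
      · rw [if_neg (by rintro ⟨h', -⟩; exact h1 h'), zero_mul]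

open Matrix
open scoped Classical in
lemma rank_jordan_pow (n : ℕ) (f : ℕ → ℕ) (Kf : ℕ) (hf : Antitone f)
    (hfK : ∀ j, Kf ≤ j → f j = 0) (hfsum : ∑ j ∈ Finset.range Kf, f j = n) (i : ℕ) :
    ((jordanOfType ℂ n f) ^ i).rank = ∑ k ∈ range Kf, (f k - i) := by
  classical
  set M := (jordanOfType ℂ n f) ^ i with hM
  set good : ℕ → Prop := fun a => ∀ c : ℕ, a < c → c ≤ a + i →
      ∀ k : ℕ, c ≠ ∑ j ∈ Finset.range k, f j with hgood
  have hMapp : ∀ a b : Fin n, M a b =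
      if ((b : ℕ) = (a : ℕ) + i ∧ good (a : ℕ)) then (1 : ℂ) else 0 :=
    fun a b => jordan_pow_apply n f i a b
  set S : Finset (Fin n) := Finset.univ.filter (fun a => (a : ℕ) + i < n ∧ good (a : ℕ))
    with hS
  -- column description
  have hcol : ∀ b : Fin n, (∃ a : Fin n, a ∈ S ∧ Mᵀ b = Pi.single a 1) ∨ Mᵀ b = 0 := by
    intro b
    by_cases hex : ∃ a : Fin n, (b : ℕ) = (a : ℕ) + i ∧ good (a : ℕ)
    · obtain ⟨a, ha1, ha2⟩ := hex
      left
      refine ⟨a, ?_, ?_⟩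
      · rw [hS, Finset.mem_filter]
        exact ⟨Finset.mem_univ _, by have := b.isLt; omega, ha2⟩
      · funext a'
        rw [Matrix.transpose_apply, hMapp a' b]
        by_cases h : a' = a
        · subst h
          rw [if_pos ⟨ha1, ha2⟩, Pi.single_eq_same]
        · rw [if_neg, Pi.single_eq_of_ne h]
          rintro ⟨h1, -⟩
          exact h (Fin.ext (by omega))
    · right
      funext a'
      rw [Matrix.transpose_apply, hMapp a' b]
      rw [if_neg fun hcon => hex ⟨a', hcon⟩]
      rfl
  have hspan : Submodule.span ℂ (Set.range Mᵀ)
      = Submodule.span ℂ ((fun a : Fin n => (Pi.single a 1 : Fin n → ℂ)) '' ↑S) := by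
    apply le_antisymm
    · rw [Submodule.span_le]
      rintro _ ⟨b, rfl⟩
      rcases hcol b with ⟨a, haS, he⟩ | h0
      · rw [he]
        exact Submodule.subset_span ⟨a, Finset.mem_coe.mpr haS, rfl⟩
      · rw [h0]
        exact Submodule.zero_mem _
    · rw [Submodule.span_le]
      rintro _ ⟨a, haS, rfl⟩
      have haS' : a ∈ S := Finset.mem_coe.mp haS
      rw [hS, Finset.mem_filter] at haS'
      obtain ⟨-, hlt, hgd⟩ := haS'
      set b : Fin n := ⟨(a : ℕ) + i, hlt⟩ with hb
      have : Mᵀ b = Pi.single a 1 := by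
        funext a'
        rw [Matrix.transpose_apply, hMapp a' b]
        by_cases h : a' = a
        · subst h
          rw [if_pos ⟨rfl, hgd⟩, Pi.single_eq_same]
        · rw [if_neg, Pi.single_eq_of_ne h]
          rintro ⟨h1, -⟩
          have hbv : (b : ℕ) = (a : ℕ) + i := rfl
          exact h (Fin.ext (by omega))
      show (Pi.single a (1 : ℂ) : Fin n → ℂ) ∈ Submodule.span ℂ (Set.range Mᵀ)
      rw [← this]
      exact Submodule.subset_span ⟨b, rfl⟩
  have hrank : M.rank = S.card := by
    rw [Matrix.rank_eq_finrank_span_cols, show Set.range M.col = Set.range Mᵀ from rfl, hspan]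
    rw [Set.image_eq_range]
    simp only [Finset.coe_sort_coe]
    have li : LinearIndependent ℂ (fun a : {x // x ∈ S} => (Pi.single (a : Fin n) 1 : Fin n → ℂ)) := by
      have h1 := (Pi.basisFun ℂ (Fin n)).linearIndependent.comp
        (fun a : {x // x ∈ S} => (a : Fin n)) Subtype.val_injective
      simpa [Function.comp_def, Pi.basisFun_apply] using h1
    rw [finrank_span_eq_card li, Fintype.card_coe]
  rw [hrank]
  -- now count S
  have hmono : Monotone (fun k => ∑ j ∈ Finset.range k, f j) :=
    fun k k' h => Finset.sum_le_sum_of_subset (Finset.range_subset_range.mpr h)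
  set T : Finset ℕ := (range Kf).biUnion
    (fun k => Finset.Ico (∑ j ∈ Finset.range k, f j) (∑ j ∈ Finset.range k, f j + (f k - i)))
    with hT
  have hdisj : ∀ k ∈ range Kf, ∀ k' ∈ range Kf, k ≠ k' →
      Disjoint (Finset.Ico (∑ j ∈ Finset.range k, f j) (∑ j ∈ Finset.range k, f j + (f k - i)))
        (Finset.Ico (∑ j ∈ Finset.range k', f j) (∑ j ∈ Finset.range k', f j + (f k' - i))) := by
    intro k _ k' _ hkk'
    rw [Finset.disjoint_left]
    intro x hx hx'
    rw [Finset.mem_Ico] at hx hx'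
    rcases lt_or_gt_of_ne hkk' with h | h
    · have e1 : ∑ j ∈ Finset.range (k + 1), f j = ∑ j ∈ Finset.range k, f j + f k :=
        Finset.sum_range_succ f k
      have e2 : ∑ j ∈ Finset.range (k + 1), f j ≤ ∑ j ∈ Finset.range k', f j :=
        hmono (by omega)
      omega
    · have e1 : ∑ j ∈ Finset.range (k' + 1), f j = ∑ j ∈ Finset.range k', f j + f k' :=
        Finset.sum_range_succ f k'
      have e2 : ∑ j ∈ Finset.range (k' + 1), f j ≤ ∑ j ∈ Finset.range k, f j :=
        hmono (by omega)
      omega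
  have hTcard : T.card = ∑ k ∈ range Kf, (f k - i) := by
    rw [hT, Finset.card_biUnion hdisj]
    exact Finset.sum_congr rfl fun k _ => by rw [Nat.card_Ico]; omega
  rw [← hTcard]
  -- bijection between S and T
  apply Finset.card_bij (fun (a : Fin n) _ => (a : ℕ))
  · -- maps into T
    intro a haS
    rw [hS, Finset.mem_filter] at haS
    obtain ⟨-, hlt, hgd⟩ := haS
    have hn0 : 0 < n := lt_of_le_of_lt (Nat.zero_le _) a.isLt
    have hKf0 : 0 < Kf := by
      rcases Nat.eq_zero_or_pos Kf with h | h
      · subst h; simp at hfsum; omega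
      · exact h
    set s : Finset ℕ := (range Kf).filter (fun j => ∑ x ∈ Finset.range j, f x ≤ (a : ℕ))
      with hs
    have h0s : 0 ∈ s := by
      rw [hs, Finset.mem_filter, Finset.mem_range]
      simp [hKf0]
    have hne : s.Nonempty := ⟨0, h0s⟩
    set k := s.max' hne with hk
    have hks : k ∈ s := s.max'_mem hne
    rw [hs, Finset.mem_filter, Finset.mem_range] at hks
    obtain ⟨hkKf, hkle⟩ := hks
    have hnext : (a : ℕ) < ∑ j ∈ Finset.range (k + 1), f j := by
      by_cases h : k + 1 < Kf
      · by_contra hcon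
        have : k + 1 ∈ s := by
          rw [hs, Finset.mem_filter, Finset.mem_range]
          exact ⟨h, by omega⟩
        have := s.le_max' _ this
        omega
      · have : k + 1 = Kf := by omega
        rw [this, hfsum]
        exact a.isLt
    have hstep : ∑ j ∈ Finset.range (k + 1), f j = ∑ j ∈ Finset.range k, f j + f k :=
      Finset.sum_range_succ f k
    have hgood_blk : (a : ℕ) + i < ∑ j ∈ Finset.range (k + 1), f j := by
      by_contra hcon
      exact hgd (∑ j ∈ Finset.range (k + 1), f j) (by omega) (by omega) (k + 1) rfl
    rw [hT, Finset.mem_biUnion]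
    exact ⟨k, Finset.mem_range.mpr hkKf, Finset.mem_Ico.mpr ⟨hkle, by omega⟩⟩
  · -- injective
    intro a _ a' _ h
    exact Fin.ext h
  · -- surjective
    intro x hx
    rw [hT, Finset.mem_biUnion] at hx
    obtain ⟨k, hk, hxk⟩ := hx
    rw [Finset.mem_range] at hk
    rw [Finset.mem_Ico] at hxk
    have hstep : ∑ j ∈ Finset.range (k + 1), f j = ∑ j ∈ Finset.range k, f j + f k :=
      Finset.sum_range_succ f k
    have hub : ∑ j ∈ Finset.range (k + 1), f j ≤ n := by
      rw [← hfsum]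
      exact hmono hk
    have hxin : x + i < n := by omega
    have hxn : x < n := by omega
    refine ⟨⟨x, hxn⟩, ?_, rfl⟩
    rw [hS, Finset.mem_filter]
    refine ⟨Finset.mem_univ _, by simpa using hxin, ?_⟩
    intro c hc hc' k' hcon
    rcases Nat.lt_or_ge k' (k + 1) with h | h
    · have : ∑ j ∈ Finset.range k', f j ≤ ∑ j ∈ Finset.range k, f j := hmono (by omega)
      simp only [Fin.val_mk] at hc hc'
      omega
    · have : ∑ j ∈ Finset.range (k + 1), f j ≤ ∑ j ∈ Finset.range k', f j := hmono h
      simp only [Fin.val_mk] at hc hc'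
      omega

lemma rank_conj (n : ℕ) (P : Matrix.GeneralLinearGroup (Fin n) ℂ)
    (A : Matrix (Fin n) (Fin n) ℂ) :
    ((P : Matrix (Fin n) (Fin n) ℂ) * A *
      ((P⁻¹ : Matrix.GeneralLinearGroup (Fin n) ℂ) : Matrix (Fin n) (Fin n) ℂ)).rank
      = A.rank := by
  apply le_antisymm
  · exact le_trans (Matrix.rank_mul_le_left _ _) (Matrix.rank_mul_le_right _ _)
  · have h : ((P⁻¹ : Matrix.GeneralLinearGroup (Fin n) ℂ) : Matrix (Fin n) (Fin n) ℂ) *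
        ((P : Matrix (Fin n) (Fin n) ℂ) * A *
          ((P⁻¹ : Matrix.GeneralLinearGroup (Fin n) ℂ) : Matrix (Fin n) (Fin n) ℂ)) *
        (P : Matrix (Fin n) (Fin n) ℂ) = A := by
      have e : ((P⁻¹ : Matrix.GeneralLinearGroup (Fin n) ℂ) : Matrix (Fin n) (Fin n) ℂ) *
          (P : Matrix (Fin n) (Fin n) ℂ) = 1 := Units.inv_mul P
      calc ((P⁻¹ : Matrix.GeneralLinearGroup (Fin n) ℂ) : Matrix (Fin n) (Fin n) ℂ) *
            ((P : Matrix (Fin n) (Fin n) ℂ) * A *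
              ((P⁻¹ : Matrix.GeneralLinearGroup (Fin n) ℂ) : Matrix (Fin n) (Fin n) ℂ)) *
            (P : Matrix (Fin n) (Fin n) ℂ)
          = (((P⁻¹ : Matrix.GeneralLinearGroup (Fin n) ℂ) : Matrix (Fin n) (Fin n) ℂ) *
              (P : Matrix (Fin n) (Fin n) ℂ)) * A *
            (((P⁻¹ : Matrix.GeneralLinearGroup (Fin n) ℂ) : Matrix (Fin n) (Fin n) ℂ) *
              (P : Matrix (Fin n) (Fin n) ℂ)) := by noncomm_ring
        _ = A := by rw [e, one_mul, mul_one]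
    conv_lhs => rw [← h]
    exact le_trans (Matrix.rank_mul_le_left _ _) (Matrix.rank_mul_le_right _ _)


/-- Let `λ = f` and `μ = g` be partitions of `n`, and `Nf`, `Ng` nilpotent
complex `n × n` matrices of Jordan types `λ`, `μ`.  Then
`rank(Ng ^ i) ≤ rank(Nf ^ i)` for all `i ≥ 1` iff `μ` is dominated by `λ`. -/
theorem stmt11 (n : ℕ) (f g : ℕ → ℕ) (Kf Kg : ℕ)
    (hf : Antitone f) (hg : Antitone g)
    (hfK : ∀ j, Kf ≤ j → f j = 0) (hgK : ∀ j, Kg ≤ j → g j = 0)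
    (hfsum : ∑ j ∈ Finset.range Kf, f j = n)
    (hgsum : ∑ j ∈ Finset.range Kg, g j = n)
    (Nf Ng : Matrix (Fin n) (Fin n) ℂ)
    (hNf : ∃ P : Matrix.GeneralLinearGroup (Fin n) ℂ,
        Nf = (P : Matrix (Fin n) (Fin n) ℂ) * jordanOfType ℂ n f *
          ((P⁻¹ : Matrix.GeneralLinearGroup (Fin n) ℂ) : Matrix (Fin n) (Fin n) ℂ))
    (hNg : ∃ P : Matrix.GeneralLinearGroup (Fin n) ℂ,
        Ng = (P : Matrix (Fin n) (Fin n) ℂ) * jordanOfType ℂ n g *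
          ((P⁻¹ : Matrix.GeneralLinearGroup (Fin n) ℂ) : Matrix (Fin n) (Fin n) ℂ)) :
    (∀ i : ℕ, 1 ≤ i → (Ng ^ i).rank ≤ (Nf ^ i).rank) ↔ Dominates f g := by
  unfold Dominates
  obtain ⟨P, hP⟩ := hNf
  obtain ⟨Q, hQ⟩ := hNg
  have hrf : ∀ i : ℕ, (Nf ^ i).rank = ∑ k ∈ Finset.range Kf, (f k - i) := by
    intro i
    rw [hP, Units.conj_pow, rank_conj, rank_jordan_pow n f Kf hf hfK hfsum i]
  have hrg : ∀ i : ℕ, (Ng ^ i).rank = ∑ k ∈ Finset.range Kg, (g k - i) := by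
    intro i
    rw [hQ, Units.conj_pow, rank_conj, rank_jordan_pow n g Kg hg hgK hgsum i]
  have hk := key_iff n f g Kf Kg hf hg hfK hgK hfsum hgsum
  constructor
  · intro H
    exact hk.mp fun i hi => by rw [← hrf i, ← hrg i]; exact H i hi
  · intro H i hi
    rw [hrf i, hrg i]
    exact hk.mpr H i hi
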